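/- There exists a unitary operator U₁ from H²_anti onto ℓ²(ℕ; E) such that U₁ T_p = S U₁, where E is the closed linear span in H²_anti of {a_p : p ∈ ⟦n⟧ with last coordinate p_d = 0}, ℓ²(ℕ; E) is the space of square-summable E-valued sequences (the vector-valued Hardy space H²_E(𝔻)), and S is the unilateral shift on ℓ²(ℕ; E) given by S(x_0, x_1, x_2, …) = (0, x_0, x_1, …). In particular, T_p on H²_anti is unitarily equivalent to a unilateral shift of infinite multiplicity. -/

import Mathlib

open MeasureTheory Complex ContinuousLinearMap
open scoped ENNReal

noncomputable section

namespace SymPoly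

/-- The `i`-th elementary symmetric polynomial of an `n`-tuple of complex numbers. -/
def esymC (n i : ℕ) (w : Fin n → ℂ) : ℂ :=
  ∑ S ∈ Finset.univ.powersetCard i, ∏ k ∈ S, w k

variable (d : ℕ)

/-- The `d`-torus, parametrized additively; the normalized Haar measure is `volume`. -/
abbrev Pt := Fin d → AddCircle (1 : ℝ)

/-- The coordinates of a point of the `d`-torus, as complex numbers of modulus one. -/
def zv (θ : Pt d) : Fin d → ℂ := fun k => (AddCircle.toCircle (θ k) : ℂ)

/-- The monomial `z ^ m` (with `m : Fin d → ℤ`) on the `d`-torus. -/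
def monom (m : Fin d → ℤ) (θ : Pt d) : ℂ :=
  ((∏ k, (AddCircle.toCircle (θ k)) ^ (m k) : Circle) : ℂ)

/-- The antisymmetrized monomial `a_m = ∑_σ sgn σ • z ^ (m ∘ σ)`. -/
def aFun (m : Fin d → ℤ) (θ : Pt d) : ℂ :=
  ∑ σ : Equiv.Perm (Fin d), ((Equiv.Perm.sign σ : ℤ) : ℂ) * monom d (m ∘ σ) θ

/-- `L²` of the `d`-torus with normalized Haar measure. -/
abbrev L2 := Lp ℂ 2 (volume : Measure (Pt d))

lemma continuous_monom (m : Fin d → ℤ) : Continuous (monom d m) := by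
  have h1 : Continuous fun θ : Pt d => (∏ k, (AddCircle.toCircle (θ k)) ^ (m k) : Circle) := by
    apply continuous_finset_prod
    intro k _
    exact (continuous_zpow (m k)).comp (AddCircle.continuous_toCircle.comp (continuous_apply k))
  have h2 : Continuous ((↑) : Circle → ℂ) := continuous_subtype_val
  exact h2.comp h1

lemma continuous_aFun (m : Fin d → ℤ) : Continuous (aFun d m) :=
  continuous_finset_sum _ fun σ _ => continuous_const.mul (continuous_monom d (m ∘ σ))

lemma memℒp_top_of_continuous {f : Pt d → ℂ} (hf : Continuous f) :
    MemLp f ⊤ (volume : Measure (Pt d)) :=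
  hf.memLp_top_of_hasCompactSupport
    (IsCompact.of_isClosed_subset isCompact_univ (isClosed_tsupport f) (Set.subset_univ _)) _

lemma memℒp_aFun (m : Fin d → ℤ) : MemLp (aFun d m) 2 volume :=
  (memℒp_top_of_continuous d (continuous_aFun d m)).mono_exponent le_top

/-- `a_m` as an element of `L²`. -/
def aLp (m : Fin d → ℤ) : L2 d := (memℒp_aFun d m).toLp _

/-- The action of a permutation on points of the torus. -/
def permAct (σ : Equiv.Perm (Fin d)) (θ : Pt d) : Pt d := fun k => θ (σ k)

lemma measurePreserving_permAct (σ : Equiv.Perm (Fin d)) :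
    MeasurePreserving (permAct d σ) volume volume := by
  have h := MeasureTheory.volume_measurePreserving_piCongrLeft
    (fun _ : Fin d => AddCircle (1 : ℝ)) σ.symm
  have heq : permAct d σ =
      ⇑(MeasurableEquiv.piCongrLeft (fun _ : Fin d => AddCircle (1 : ℝ)) σ.symm) := by
    funext θ k
    conv_rhs => rw [show k = σ.symm (σ k) by simp]
    rw [MeasurableEquiv.piCongrLeft_apply_apply]
    rfl
  rw [heq]
  exact h

/-- Composition with a permutation of the coordinates, as a linear isometry of `L²`. -/
def compPerm (σ : Equiv.Perm (Fin d)) : L2 d →ₗᵢ[ℂ] L2 d :=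
  Lp.compMeasurePreservingₗᵢ ℂ (permAct d σ) (measurePreserving_permAct d σ)

/-- The antisymmetric part of `L²` of the torus, i.e. those `f` with
`f (z_σ) = sgn σ • f z` almost everywhere, for every permutation `σ`. -/
def L2anti : Submodule ℂ (L2 d) where
  carrier := {f | ∀ σ : Equiv.Perm (Fin d),
    compPerm d σ f = (((Equiv.Perm.sign σ : ℤ) : ℂ)) • f}
  add_mem' := by
    intro f g hf hg σ
    simp only [LinearIsometry.map_add, hf σ, hg σ, smul_add]
  zero_mem' := by
    intro σ
    simp only [LinearIsometry.map_zero, smul_zero]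
  smul_mem' := by
    intro c f hf σ
    simp only [LinearIsometry.map_smul, hf σ]
    rw [smul_comm]

lemma isClosed_L2anti : IsClosed (L2anti d : Set (L2 d)) := by
  have : (L2anti d : Set (L2 d)) = ⋂ σ : Equiv.Perm (Fin d),
      {f | compPerm d σ f = (((Equiv.Perm.sign σ : ℤ) : ℂ)) • f} := by
    ext f
    simp only [Set.mem_iInter]
    rfl
  rw [this]
  exact isClosed_iInter fun σ =>
    isClosed_eq (compPerm d σ).continuous (continuous_const_smul _)

/-- The (boundary-value model of the) Hardy space of the symmetrized polydisk:
the closed span of the antisymmetrized monomials `a_m` with `m` strictly decreasing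
and nonnegative. -/
def H2 : Submodule ℂ (L2 d) :=
  (Submodule.span ℂ
    {f : L2 d | ∃ m : Fin d → ℤ, StrictAnti m ∧ (∀ k, 0 ≤ m k) ∧ f = aLp d m}).topologicalClosure

instance : CompleteSpace (H2 d) := by unfold H2; infer_instance

instance : Submodule.HasOrthogonalProjection (H2 d) := by unfold H2; infer_instance

/-- Multiplication by an essentially bounded function, as a continuous linear operator
on an `L²`-space. -/
def mulCLM {α : Type} [MeasurableSpace α] (μ : Measure α) (φ : α → ℂ)
    (hφ : MemLp φ ⊤ μ) : Lp ℂ 2 μ →L[ℂ] Lp ℂ 2 μ :=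
  LinearMap.mkContinuous
    { toFun := fun f => MemLp.toLp (φ • ⇑f) ((Lp.memLp f).smul hφ)
      map_add' := fun f g => by
        rw [← MemLp.toLp_add]
        apply MemLp.toLp_congr
        filter_upwards [Lp.coeFn_add f g] with x hx
        simp only [Pi.smul_apply, Pi.mul_apply, Pi.add_apply, hx, smul_eq_mul, mul_add]
      map_smul' := fun c f => by
        simp only [RingHom.id_apply]
        rw [← MemLp.toLp_const_smul c ((Lp.memLp f).smul hφ)]
        apply MemLp.toLp_congr
        filter_upwards [Lp.coeFn_smul c f] with x hx
        simp only [Pi.smul_apply, Pi.mul_apply, hx, smul_eq_mul]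
        ring }
    (eLpNorm φ ⊤ μ).toReal
    (fun f => by
      simp only [LinearMap.coe_mk, AddHom.coe_mk]
      rw [Lp.norm_toLp]
      have h := eLpNorm_smul_le_eLpNorm_top_mul_eLpNorm 2 (Lp.aestronglyMeasurable f) φ
      calc (eLpNorm (φ • ⇑f) 2 μ).toReal
          ≤ (eLpNorm φ ⊤ μ * eLpNorm (⇑f) 2 μ).toReal := by
            apply ENNReal.toReal_mono _ h
            exact ENNReal.mul_ne_top hφ.2.ne (Lp.memLp f).2.ne
        _ = (eLpNorm φ ⊤ μ).toReal * ‖f‖ := by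
            rw [ENNReal.toReal_mul, Lp.norm_def])

lemma mulCLM_coeFn {α : Type} [MeasurableSpace α] (μ : Measure α) (φ : α → ℂ)
    (hφ : MemLp φ ⊤ μ) (f : Lp ℂ 2 μ) :
    ⇑(mulCLM μ φ hφ f) =ᵐ[μ] fun x => φ x * f x := by
  have h : ⇑(mulCLM μ φ hφ f) =ᵐ[μ] φ • ⇑f :=
    MemLp.coeFn_toLp ((Lp.memLp f).smul hφ)
  filter_upwards [h] with x hx
  simpa [Pi.smul_apply, smul_eq_mul] using hx

/-- A function on the torus is symmetric if it is invariant, a.e., under every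
permutation of the coordinates. -/
def IsSymm (φ : Pt d → ℂ) : Prop :=
  ∀ σ : Equiv.Perm (Fin d), (fun θ => φ (permAct d σ θ)) =ᵐ[volume] φ

/-- The Toeplitz operator with (essentially bounded) symbol `φ`:
compress multiplication by `φ` to the Hardy space. -/
def toep (φ : Pt d → ℂ) (hφ : MemLp φ ⊤ volume) : H2 d →L[ℂ] H2 d :=
  ((H2 d).orthogonalProjectionOnto) ∘L ((mulCLM volume φ hφ) ∘L (H2 d).subtypeL)

/-- `T` is a Toeplitz operator if it is `T_φ` for some essentially bounded symmetric
symbol `φ`. -/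
def IsToeplitz (T : H2 d →L[ℂ] H2 d) : Prop :=
  ∃ (φ : Pt d → ℂ) (hφ : MemLp φ ⊤ volume), IsSymm d φ ∧ T = toep d φ hφ

/-- The elementary symmetric polynomials as functions on the torus. -/
def sFun (i : ℕ) : Pt d → ℂ := fun θ => esymC d i (zv d θ)

lemma continuous_sFun (i : ℕ) : Continuous (sFun d i) := by
  unfold sFun esymC
  apply continuous_finset_sum
  intro S _
  apply continuous_finset_prod
  intro k _
  have h2 : Continuous ((↑) : Circle → ℂ) := continuous_subtype_val
  exact h2.comp (AddCircle.continuous_toCircle.comp (continuous_apply k))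

lemma sMem (i : ℕ) : MemLp (sFun d i) ⊤ volume :=
  memℒp_top_of_continuous d (continuous_sFun d i)

/-- The Toeplitz operators `T_{s_i}` with elementary symmetric polynomial symbols;
`Ts d d` is `T_p`. -/
def Ts (i : ℕ) : H2 d →L[ℂ] H2 d := toep d (sFun d i) (sMem d i)

lemma aLp_mem_H2 (m : Fin d → ℤ) (h1 : StrictAnti m) (h2 : ∀ k, 0 ≤ m k) :
    aLp d m ∈ H2 d :=
  Submodule.le_topologicalClosure _ (Submodule.subset_span ⟨m, h1, h2, rfl⟩)

open scoped Classical in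
/-- `a_m` as an element of the Hardy space (junk value `0` if `m` is not a
strictly decreasing nonnegative tuple). -/
def aH (m : Fin d → ℤ) : H2 d :=
  if h : StrictAnti m ∧ ∀ k, 0 ≤ m k then ⟨aLp d m, aLp_mem_H2 d m h.1 h.2⟩ else 0

/-- The tuple with `1` in the first `j` coordinates and `0` elsewhere. -/
def fj (j : ℕ) : Fin d → ℤ := fun k => if (k : ℕ) < j then 1 else 0


/-- The coefficient space of the symmetrized polydisk: the closed span of the
antisymmetrized monomials `a_m` with `m` strictly decreasing, nonnegative and with
last coordinate zero. -/
def Ecoef : Submodule ℂ (L2 d) :=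
  (Submodule.span ℂ
    {f : L2 d | ∃ m : Fin d → ℤ, StrictAnti m ∧ (∀ k, 0 ≤ m k) ∧
      (∀ k : Fin d, (k : ℕ) = d - 1 → m k = 0) ∧ f = aLp d m}).topologicalClosure

section Chunk1

lemma circle_coe_zpow (z : Circle) (n : ℤ) : ((z ^ n : Circle) : ℂ) = (z : ℂ) ^ n := by
  cases n with
  | ofNat k => simpa using map_pow Circle.coeHom z k
  | negSucc k => simpa [zpow_negSucc] using congrArg Inv.inv (map_pow Circle.coeHom z (k+1))

lemma addCircle_toCircle_neg (x : AddCircle (1:ℝ)) :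
    AddCircle.toCircle (-x) = (AddCircle.toCircle x)⁻¹ := by
  apply eq_inv_of_mul_eq_one_left
  rw [← AddCircle.toCircle_add, neg_add_cancel, AddCircle.toCircle_zero]

lemma addCircle_toCircle_zsmul (n : ℤ) (x : AddCircle (1:ℝ)) :
    AddCircle.toCircle (n • x) = AddCircle.toCircle x ^ n := by
  induction n using Int.induction_on with
  | zero => simp [AddCircle.toCircle_zero]
  | succ k ih =>
      rw [add_smul, one_smul, AddCircle.toCircle_add, ih, zpow_add_one]
  | pred k ih =>
      rw [sub_smul, one_smul, sub_eq_add_neg, AddCircle.toCircle_add, ih,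
        addCircle_toCircle_neg, zpow_sub_one]

lemma integral_toCircle_zpow (n : ℤ) :
    ∫ x : AddCircle (1:ℝ), ((AddCircle.toCircle x : ℂ)) ^ n ∂volume
      = if n = 0 then 1 else 0 := by
  haveI : Fact (0 < (1:ℝ)) := ⟨one_pos⟩
  have hvol : (volume : Measure (AddCircle (1:ℝ))) = AddCircle.haarAddCircle := by
    rw [AddCircle.volume_eq_smul_haarAddCircle]; simp
  have hf : ∀ x : AddCircle (1:ℝ), ((AddCircle.toCircle x : ℂ)) ^ n = fourier n x := by
    intro x
    rw [fourier_apply, addCircle_toCircle_zsmul, circle_coe_zpow]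
  simp_rw [hf, hvol]
  split_ifs with h
  · subst h
    simp_rw [fourier_zero]
    simp
  · exact integral_eq_zero_of_add_right_eq_neg
      (fourier_add_half_inv_index h one_pos)

end Chunk1

section Chunk2

lemma monom_eq_prod (m : Fin d → ℤ) (θ : Pt d) :
    monom d m θ = ∏ k, ((AddCircle.toCircle (θ k) : ℂ)) ^ (m k) :=
  calc ((∏ k, AddCircle.toCircle (θ k) ^ m k : Circle) : ℂ)
      = ∏ k, ((AddCircle.toCircle (θ k) ^ m k : Circle) : ℂ) :=
        map_prod Circle.coeHom _ _
    _ = ∏ k, ((AddCircle.toCircle (θ k) : ℂ)) ^ (m k) := by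
        simp_rw [circle_coe_zpow]

lemma integral_monom (m : Fin d → ℤ) :
    ∫ θ : Pt d, monom d m θ ∂volume = if m = 0 then 1 else 0 := by
  simp_rw [monom_eq_prod]
  rw [show (∫ θ : Pt d, ∏ k, ((AddCircle.toCircle (θ k) : ℂ)) ^ (m k) ∂volume)
      = ∏ k, ∫ x : AddCircle (1:ℝ), ((AddCircle.toCircle x : ℂ)) ^ (m k) ∂volume from
    MeasureTheory.integral_fintype_prod_eq_prod (ι := Fin d)
      (fun k x => ((AddCircle.toCircle x : ℂ)) ^ (m k))]
  simp_rw [integral_toCircle_zpow]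
  by_cases h : m = 0
  · simp [h]
  · rw [if_neg h]
    obtain ⟨k, hk⟩ : ∃ k, m k ≠ 0 := by
      by_contra hc; push_neg at hc; exact h (funext hc)
    exact Finset.prod_eq_zero (Finset.mem_univ k) (by simp [hk])

lemma memLp_monom (m : Fin d → ℤ) : MemLp (monom d m) 2 (volume : Measure (Pt d)) :=
  (memℒp_top_of_continuous d (continuous_monom d m)).mono_exponent le_top

/-- The monomial as an element of `L²`. -/
def monLp (m : Fin d → ℤ) : L2 d := (memLp_monom d m).toLp _

lemma monom_mul (m m' : Fin d → ℤ) (θ : Pt d) :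
    monom d m θ * monom d m' θ = monom d (m + m') θ := by
  simp_rw [monom_eq_prod]
  rw [← Finset.prod_mul_distrib]
  apply Finset.prod_congr rfl
  intro k _
  rw [← zpow_add₀ (Circle.coe_ne_zero _)]
  rfl

lemma monom_conj (m : Fin d → ℤ) (θ : Pt d) :
    (starRingEnd ℂ) (monom d m θ) = monom d (-m) θ := by
  unfold monom
  rw [← Circle.coe_inv_eq_conj]
  congr 1
  rw [← Finset.prod_inv_distrib]
  apply Finset.prod_congr rfl
  intro k _
  rw [← zpow_neg]
  rfl

lemma inner_monLp (m m' : Fin d → ℤ) :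
    (inner ℂ (monLp d m) (monLp d m') : ℂ) = if m = m' then 1 else 0 := by
  rw [MeasureTheory.L2.inner_def]
  have key : (∫ θ, (inner ℂ (monLp d m θ) (monLp d m' θ) : ℂ) ∂(volume : Measure (Pt d)))
      = ∫ θ : Pt d, monom d (-m + m') θ ∂volume := by
    apply integral_congr_ae
    filter_upwards [(memLp_monom d m).coeFn_toLp, (memLp_monom d m').coeFn_toLp]
      with θ e1 e2
    rw [RCLike.inner_apply]
    show (monLp d m' θ) * (starRingEnd ℂ) (monLp d m θ) = _
    simp only [monLp]
    rw [e1, e2, monom_conj, mul_comm, monom_mul]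
  rw [key, integral_monom]
  by_cases h : m = m'
  · simp [h]
  · rw [if_neg h, if_neg]
    intro hc
    apply h
    funext k
    have := congrFun hc k
    simp only [Pi.add_apply, Pi.neg_apply, Pi.zero_apply] at this
    omega

lemma Lp_coeFn_sum {α : Type} [MeasurableSpace α] {μ : Measure α} {ι : Type*}
    (s : Finset ι) (f : ι → Lp ℂ 2 μ) :
    ⇑(∑ i ∈ s, f i) =ᵐ[μ] fun x => ∑ i ∈ s, f i x := by
  classical
  induction s using Finset.induction_on with
  | empty => simp only [Finset.sum_empty]; exact Lp.coeFn_zero ℂ 2 μ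
  | @insert a s h ih =>
      rw [Finset.sum_insert h]
      filter_upwards [Lp.coeFn_add (f a) (∑ i ∈ s, f i), ih] with x hx hx2
      rw [hx]
      simp only [Pi.add_apply, Finset.sum_insert h, hx2]

lemma aLp_eq_sum (m : Fin d → ℤ) :
    aLp d m = ∑ σ : Equiv.Perm (Fin d),
      ((Equiv.Perm.sign σ : ℤ) : ℂ) • monLp d (m ∘ σ) := by
  apply Lp.ext
  have h1 : ⇑(aLp d m) =ᵐ[volume] aFun d m := (memℒp_aFun d m).coeFn_toLp
  have h2 : ⇑(∑ σ : Equiv.Perm (Fin d), ((Equiv.Perm.sign σ : ℤ) : ℂ) • monLp d (m ∘ σ))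
      =ᵐ[volume] fun θ => ∑ σ : Equiv.Perm (Fin d),
        (((Equiv.Perm.sign σ : ℤ) : ℂ) • monLp d (m ∘ σ)) θ :=
    Lp_coeFn_sum _ _
  have h3 : ∀ σ : Equiv.Perm (Fin d),
      ⇑(((Equiv.Perm.sign σ : ℤ) : ℂ) • monLp d (m ∘ σ)) =ᵐ[volume]
        fun θ => ((Equiv.Perm.sign σ : ℤ) : ℂ) * monom d (m ∘ σ) θ := by
    intro σ
    filter_upwards [Lp.coeFn_smul (((Equiv.Perm.sign σ : ℤ) : ℂ)) (monLp d (m ∘ σ)),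
      (memLp_monom d (m ∘ σ)).coeFn_toLp] with θ e1 e2
    rw [e1]
    simp only [Pi.smul_apply, smul_eq_mul, monLp]
    rw [e2]
  have h4 := (MeasureTheory.ae_all_iff).mpr h3
  filter_upwards [h1, h2, h4] with θ e1 e2 e4
  rw [e1, e2]
  unfold aFun
  exact (Finset.sum_congr rfl fun σ _ => e4 σ).symm

end Chunk2

section Chunk3

lemma perm_strictMono_eq_refl {d : ℕ} (π : Equiv.Perm (Fin d))
    (h : StrictMono (π : Fin d → Fin d)) : π = Equiv.refl (Fin d) := by
  have h2 : StrictMono (π.symm : Fin d → Fin d) := by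
    intro a b hab
    apply h.lt_iff_lt.mp
    simpa using hab
  haveI : WellFoundedLT (Fin d) := Finite.to_wellFoundedLT
  ext k
  have ha : k ≤ π k := h.le_apply (x := k)
  have hb : π k ≤ k := by
    have := h2.le_apply (x := π k)
    simpa using this
  exact congrArg Fin.val (le_antisymm hb ha)

lemma comp_eq_iff {d : ℕ} {m m' : Fin d → ℤ} (hm : StrictAnti m) (hm' : StrictAnti m')
    {σ τ : Equiv.Perm (Fin d)} : m ∘ σ = m' ∘ τ ↔ m = m' ∧ σ = τ := by
  constructor
  · intro h
    have hval : ∀ k, m (σ k) = m' (τ k) := fun k => congrFun h k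
    set π : Equiv.Perm (Fin d) := σ.symm.trans τ with hπ
    have hmπ : ∀ x, m' (π x) = m x := by
      intro x
      have := hval (σ.symm x)
      simp only [Equiv.apply_symm_apply] at this
      simpa [hπ, Equiv.trans_apply] using this.symm
    have hmono : StrictMono (π : Fin d → Fin d) := by
      intro a b hab
      apply hm'.lt_iff_gt.mp
      rw [hmπ, hmπ]
      exact hm hab
    have hπid : π = Equiv.refl _ := perm_strictMono_eq_refl π hmono
    have hστ : σ = τ := by
      ext x
      have h1 : π (σ x) = σ x := by rw [hπid]; rfl
      have h2 : π (σ x) = τ x := by simp [hπ, Equiv.trans_apply]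
      exact congrArg Fin.val (h1.symm.trans h2)
    refine ⟨?_, hστ⟩
    funext x
    have h1 : π x = x := by rw [hπid]; rfl
    have := hmπ x
    rw [h1] at this
    exact this.symm
  · rintro ⟨rfl, rfl⟩; rfl

lemma inner_aLp {d : ℕ} {m m' : Fin d → ℤ} (hm : StrictAnti m) (hm' : StrictAnti m') :
    (inner ℂ (aLp d m) (aLp d m') : ℂ) = if m = m' then ((d.factorial : ℤ) : ℂ) else 0 := by
  rw [aLp_eq_sum, aLp_eq_sum, sum_inner]
  simp_rw [inner_sum, inner_smul_left, inner_smul_right, inner_monLp]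
  have hconj : ∀ σ : Equiv.Perm (Fin d),
      (starRingEnd ℂ) ((Equiv.Perm.sign σ : ℤ) : ℂ) = ((Equiv.Perm.sign σ : ℤ) : ℂ) :=
    fun σ => map_intCast _ _
  simp_rw [hconj]
  by_cases h : m = m'
  · subst h
    rw [if_pos rfl]
    have key : ∀ σ τ : Equiv.Perm (Fin d),
        (if m ∘ ⇑σ = m ∘ ⇑τ then (1:ℂ) else 0) = if σ = τ then 1 else 0 := by
      intro σ τ
      by_cases hc : σ = τ
      · subst hc; simp
      · rw [if_neg hc, if_neg]
        intro hcontra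
        exact hc ((comp_eq_iff hm hm).mp hcontra).2
    simp_rw [key, mul_ite, mul_one, mul_zero, Finset.sum_ite_eq, Finset.mem_univ,
      if_true]
    have hsq : ∀ σ : Equiv.Perm (Fin d),
        ((Equiv.Perm.sign σ : ℤ) : ℂ) * ((Equiv.Perm.sign σ : ℤ) : ℂ) = 1 := by
      intro σ
      have h1 : ((Equiv.Perm.sign σ : ℤ)) * ((Equiv.Perm.sign σ : ℤ)) = 1 :=
        by rcases Int.units_eq_one_or (Equiv.Perm.sign σ) with h' | h' <;>
            rw [h'] <;> norm_num
      rw [← Int.cast_mul, h1, Int.cast_one]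
    simp_rw [hsq]
    rw [Finset.sum_const, Finset.card_univ, Fintype.card_perm, Fintype.card_fin,
      nsmul_eq_mul, mul_one]
    norm_cast
  · rw [if_neg h]
    apply Finset.sum_eq_zero
    intro σ _
    apply Finset.sum_eq_zero
    intro τ _
    rw [if_neg, mul_zero, mul_zero]
    intro hcontra
    exact h ((comp_eq_iff hm hm').mp hcontra).1

/-- If `X` lies in the closure of the span of `S` and is orthogonal to every element
of `S`, then `X = 0`. -/
lemma eq_zero_of_orthogonal_gen {d : ℕ} {S : Set (L2 d)} {X : L2 d}
    (hX : X ∈ (Submodule.span ℂ S).topologicalClosure)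
    (h0 : ∀ s ∈ S, (inner ℂ s X : ℂ) = 0) : X = 0 := by
  have h1 : ∀ u ∈ Submodule.span ℂ S, (inner ℂ u X : ℂ) = 0 := by
    intro u hu
    induction hu using Submodule.span_induction with
    | mem s hs => exact h0 s hs
    | zero => simp
    | add u v _ _ hu hv => rw [inner_add_left, hu, hv, add_zero]
    | smul c u _ hu => rw [inner_smul_left, hu, mul_zero]
  have h3 : IsClosed {y : L2 d | (inner ℂ y X : ℂ) = 0} :=
    isClosed_eq (Continuous.inner continuous_id continuous_const) continuous_const
  have h4 : closure (Submodule.span ℂ S : Set (L2 d)) ⊆ {y : L2 d | (inner ℂ y X : ℂ) = 0} :=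
    h3.closure_subset_iff.mpr h1
  have h5 : X ∈ closure (Submodule.span ℂ S : Set (L2 d)) := by
    rw [← Submodule.topologicalClosure_coe]
    exact hX
  exact inner_self_eq_zero.mp (h4 h5)

end Chunk3

section Chunk4

instance EcoefComplete (d : ℕ) : CompleteSpace (Ecoef d) := by unfold Ecoef; infer_instance

/-- Index type for the Hilbert basis of `H2`. -/
def DD (d : ℕ) : Type := {m : Fin d → ℤ // StrictAnti m ∧ ∀ k, 0 ≤ m k}

/-- Index type for the Hilbert basis of `Ecoef`. -/
def DD0 (d : ℕ) : Type :=
  {m : Fin d → ℤ // StrictAnti m ∧ (∀ k, 0 ≤ m k) ∧ ∀ k : Fin d, (k : ℕ) = d - 1 → m k = 0}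

def aH2 (d : ℕ) (m : DD d) : H2 d := ⟨aLp d m.1, aLp_mem_H2 d m.1 m.2.1 m.2.2⟩

lemma aLp_mem_Ecoef (d : ℕ) (m : Fin d → ℤ) (h1 : StrictAnti m) (h2 : ∀ k, 0 ≤ m k)
    (h3 : ∀ k : Fin d, (k : ℕ) = d - 1 → m k = 0) : aLp d m ∈ Ecoef d :=
  Submodule.le_topologicalClosure _ (Submodule.subset_span ⟨m, h1, h2, h3, rfl⟩)

def aE (d : ℕ) (m : DD0 d) : Ecoef d :=
  ⟨aLp d m.1, aLp_mem_Ecoef d m.1 m.2.1 m.2.2.1 m.2.2.2⟩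

/-- Normalizing constant `1/√(d!)`. -/
def cnrm (d : ℕ) : ℂ := (((Real.sqrt d.factorial)⁻¹ : ℝ) : ℂ)

lemma sqrt_fact_pos (d : ℕ) : 0 < Real.sqrt d.factorial :=
  Real.sqrt_pos.mpr (by exact_mod_cast d.factorial_pos)

lemma cnrm_ne_zero (d : ℕ) : cnrm d ≠ 0 := by
  unfold cnrm
  exact_mod_cast inv_ne_zero (ne_of_gt (sqrt_fact_pos d))

lemma conj_cnrm (d : ℕ) : (starRingEnd ℂ) (cnrm d) = cnrm d := Complex.conj_ofReal _

lemma cnrm_mul (d : ℕ) : cnrm d * cnrm d * ((d.factorial : ℤ) : ℂ) = 1 := by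
  unfold cnrm
  have hre : ((Real.sqrt d.factorial)⁻¹ * (Real.sqrt d.factorial)⁻¹ *
      (d.factorial : ℝ) : ℝ) = 1 := by
    have hs := (sqrt_fact_pos d).ne'
    have h2 := Real.mul_self_sqrt (le_of_lt (by exact_mod_cast d.factorial_pos :
      (0:ℝ) < d.factorial))
    calc _ = (Real.sqrt d.factorial)⁻¹ * (Real.sqrt d.factorial)⁻¹ *
          (Real.sqrt d.factorial * Real.sqrt d.factorial) := by rw [h2]
      _ = 1 := by field_simp
  calc (((Real.sqrt d.factorial)⁻¹ : ℝ) : ℂ) * (((Real.sqrt d.factorial)⁻¹ : ℝ) : ℂ) *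
        ((d.factorial : ℤ) : ℂ)
      = (((Real.sqrt d.factorial)⁻¹ * (Real.sqrt d.factorial)⁻¹ *
          (d.factorial : ℝ) : ℝ) : ℂ) := by push_cast; ring
    _ = 1 := by rw [hre]; norm_num

def bH (d : ℕ) (m : DD d) : H2 d := cnrm d • aH2 d m

def bE (d : ℕ) (m : DD0 d) : Ecoef d := cnrm d • aE d m

lemma orthonormal_bH (d : ℕ) : Orthonormal ℂ (bH d) := by
  classical
  rw [orthonormal_iff_ite]
  intro i j
  unfold bH
  rw [Submodule.coe_inner, Submodule.coe_smul, Submodule.coe_smul, inner_smul_left, inner_smul_right, conj_cnrm]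
  show cnrm d * (cnrm d * (inner ℂ (aLp d i.1) (aLp d j.1) : ℂ)) = _
  rw [inner_aLp i.2.1 j.2.1]
  by_cases h : i = j
  · subst h
    rw [if_pos rfl, if_pos rfl, ← mul_assoc]
    exact cnrm_mul d
  · rw [if_neg (fun hc => h (Subtype.ext hc)), if_neg h, mul_zero, mul_zero]

lemma orthonormal_bE (d : ℕ) : Orthonormal ℂ (bE d) := by
  classical
  rw [orthonormal_iff_ite]
  intro i j
  unfold bE
  rw [Submodule.coe_inner, Submodule.coe_smul, Submodule.coe_smul, inner_smul_left, inner_smul_right, conj_cnrm]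
  show cnrm d * (cnrm d * (inner ℂ (aLp d i.1) (aLp d j.1) : ℂ)) = _
  rw [inner_aLp i.2.1 j.2.1]
  by_cases h : i = j
  · subst h
    rw [if_pos rfl, if_pos rfl, ← mul_assoc]
    exact cnrm_mul d
  · rw [if_neg (fun hc => h (Subtype.ext hc)), if_neg h, mul_zero, mul_zero]

lemma orth_bH (d : ℕ) : (Submodule.span ℂ (Set.range (bH d)))ᗮ = ⊥ := by
  rw [Submodule.eq_bot_iff]
  intro x hx
  have hx' : ∀ s ∈ {f : L2 d | ∃ m : Fin d → ℤ, StrictAnti m ∧ (∀ k, 0 ≤ m k) ∧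
      f = aLp d m}, (inner ℂ s ((x : L2 d)) : ℂ) = 0 := by
    rintro s ⟨m, h1, h2, rfl⟩
    have hb : (inner ℂ (bH d ⟨m, h1, h2⟩) x : ℂ) = 0 :=
      (Submodule.mem_orthogonal _ _).mp hx _
        (Submodule.subset_span ⟨⟨m, h1, h2⟩, rfl⟩)
    unfold bH at hb
    rw [Submodule.coe_inner, Submodule.coe_smul, inner_smul_left, conj_cnrm, mul_eq_zero] at hb
    rcases hb with hc | hb
    · exact absurd hc (cnrm_ne_zero d)
    · exact hb
  have hzero : (x : L2 d) = 0 := eq_zero_of_orthogonal_gen x.2 hx'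
  exact Submodule.coe_eq_zero.mp hzero

lemma orth_bE (d : ℕ) : (Submodule.span ℂ (Set.range (bE d)))ᗮ = ⊥ := by
  rw [Submodule.eq_bot_iff]
  intro x hx
  have hx' : ∀ s ∈ {f : L2 d | ∃ m : Fin d → ℤ, StrictAnti m ∧ (∀ k, 0 ≤ m k) ∧
      (∀ k : Fin d, (k : ℕ) = d - 1 → m k = 0) ∧ f = aLp d m},
      (inner ℂ s ((x : L2 d)) : ℂ) = 0 := by
    rintro s ⟨m, h1, h2, h3, rfl⟩
    have hb : (inner ℂ (bE d ⟨m, h1, h2, h3⟩) x : ℂ) = 0 :=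
      (Submodule.mem_orthogonal _ _).mp hx _
        (Submodule.subset_span ⟨⟨m, h1, h2, h3⟩, rfl⟩)
    unfold bE at hb
    rw [Submodule.coe_inner, Submodule.coe_smul, inner_smul_left, conj_cnrm, mul_eq_zero] at hb
    rcases hb with hc | hb
    · exact absurd hc (cnrm_ne_zero d)
    · exact hb
  have hzero : (x : L2 d) = 0 := eq_zero_of_orthogonal_gen x.2 hx'
  exact Submodule.coe_eq_zero.mp hzero

/-- The Hilbert basis of `H2`. -/
def BH (d : ℕ) : HilbertBasis (DD d) ℂ (H2 d) :=
  HilbertBasis.mkOfOrthogonalEqBot (orthonormal_bH d) (orth_bH d)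

/-- The Hilbert basis of `Ecoef`. -/
def BE (d : ℕ) : HilbertBasis (DD0 d) ℂ (Ecoef d) :=
  HilbertBasis.mkOfOrthogonalEqBot (orthonormal_bE d) (orth_bE d)

lemma BH_apply (d : ℕ) : ⇑(BH d) = bH d :=
  HilbertBasis.coe_mkOfOrthogonalEqBot _ _

lemma BE_apply (d : ℕ) : ⇑(BE d) = bE d :=
  HilbertBasis.coe_mkOfOrthogonalEqBot _ _

end Chunk4

section Chunk5

variable (d : ℕ) (hd : 2 ≤ d)

/-- The last index of `Fin d`. -/
def idx : Fin d := ⟨d - 1, by omega⟩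

/-- The value of a tuple at the last index (the "height"). -/
def hgt (m : DD d) : ℕ := (m.1 (idx d hd)).toNat

lemma le_idx (k : Fin d) : k ≤ idx d hd := by
  have := k.isLt
  simp only [Fin.le_def, idx]
  omega

lemma hgt_cast (m : DD d) : ((hgt d hd m : ℤ)) = m.1 (idx d hd) :=
  Int.toNat_of_nonneg (m.2.2 _)

/-- Subtracting the height from a tuple, landing in `DD0`. -/
def red (m : DD d) : DD0 d :=
  ⟨fun k => m.1 k - m.1 (idx d hd),
   fun a b hab => sub_lt_sub_right (m.2.1 hab) _,
   fun k => sub_nonneg.mpr (m.2.1.antitone (le_idx d hd k)),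
   fun k hk => by
      have : k = idx d hd := Fin.ext (by simpa [idx] using hk)
      simp [this]⟩

lemma red_decomp (m : DD d) (k : Fin d) :
    m.1 k = (red d hd m).1 k + (hgt d hd m : ℤ) := by
  unfold red
  rw [hgt_cast]
  ring

lemma DD_ext {i j : DD d} (h1 : hgt d hd i = hgt d hd j)
    (h2 : red d hd i = red d hd j) : i = j := by
  apply Subtype.ext
  funext k
  have e1 := red_decomp d hd i k
  have e2 := red_decomp d hd j k
  rw [e1, e2, h1, h2]

/-- The candidate Hilbert basis of `lp (fun _ : ℕ => Ecoef d) 2`. -/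
def CB (m : DD d) : lp (fun _ : ℕ => Ecoef d) 2 :=
  lp.single 2 (hgt d hd m) (bE d (red d hd m))

lemma orthonormal_CB : Orthonormal ℂ (CB d hd) := by
  classical
  rw [orthonormal_iff_ite]
  intro i j
  unfold CB
  rw [lp.inner_single_left]
  rcases eq_or_ne (hgt d hd i) (hgt d hd j) with h | h
  · rw [h, lp.single_apply_self]
    rw [orthonormal_iff_ite.mp (orthonormal_bE d) (red d hd i) (red d hd j)]
    by_cases hij : i = j
    · subst hij; simp
    · rw [if_neg hij, if_neg]
      intro hc
      exact hij (DD_ext d hd h hc)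
  · rw [lp.single_apply_ne _ _ _ h, inner_zero_right, if_neg]
    intro hc
    exact h (by rw [hc])

/-- Lifting an element of `DD0` to height `n`. -/
def lift0 (m0 : DD0 d) (n : ℕ) : DD d :=
  ⟨fun k => m0.1 k + n,
   fun a b hab => add_lt_add_left (m0.2.1 hab) _,
   fun k => add_nonneg (m0.2.2.1 k) (Int.natCast_nonneg n)⟩

lemma hgt_lift0 (m0 : DD0 d) (n : ℕ) : hgt d hd (lift0 d m0 n) = n := by
  show ((lift0 d m0 n).1 (idx d hd)).toNat = n
  have h : (lift0 d m0 n).1 (idx d hd) = (n : ℤ) := by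
    show m0.1 (idx d hd) + (n : ℤ) = n
    rw [m0.2.2.2 (idx d hd) (by simp [idx])]
    ring
  rw [h, Int.toNat_natCast]

lemma red_lift0 (m0 : DD0 d) (n : ℕ) : red d hd (lift0 d m0 n) = m0 := by
  apply Subtype.ext
  funext k
  show (m0.1 k + (n : ℤ)) - (m0.1 (idx d hd) + (n : ℤ)) = m0.1 k
  rw [m0.2.2.2 (idx d hd) (by simp [idx])]
  ring

lemma orth_CB : (Submodule.span ℂ (Set.range (CB d hd)))ᗮ = ⊥ := by
  rw [Submodule.eq_bot_iff]
  intro f hf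
  have hcoord : ∀ n : ℕ, f n = 0 := by
    intro n
    have hperp : ∀ m0 : DD0 d, (inner ℂ (bE d m0) (f n) : ℂ) = 0 := by
      intro m0
      have hb := (Submodule.mem_orthogonal _ _).mp hf (CB d hd (lift0 d m0 n))
        (Submodule.subset_span ⟨lift0 d m0 n, rfl⟩)
      unfold CB at hb
      rw [lp.inner_single_left, hgt_lift0 d hd, red_lift0 d hd] at hb
      exact hb
    have hrepr : (BE d).repr (f n) = 0 := by
      apply lp.ext
      funext m0
      have h1 := (BE d).repr_apply_apply (f n) m0
      rw [BE_apply] at h1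
      show ((BE d).repr (f n)) m0 = _
      rw [h1, hperp m0]
      rfl
    have := (BE d).repr.map_zero
    exact (BE d).repr.injective (by rw [hrepr, this])
  apply lp.ext
  funext n
  rw [hcoord n]
  rfl

end Chunk5


section Chunk6

variable (d : ℕ) (hd : 2 ≤ d)

lemma sFun_top (θ : Pt d) : sFun d d θ = ∏ k, ((AddCircle.toCircle (θ k) : ℂ)) := by
  unfold sFun esymC zv
  have hset : (Finset.univ : Finset (Fin d)).powersetCard d = {Finset.univ} := by
    have h := Finset.powersetCard_self (Finset.univ : Finset (Fin d))
    simpa using h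
  rw [hset]
  simp

/-- Adding `1` to every entry of a strictly decreasing nonnegative tuple. -/
def succD (m : DD d) : DD d :=
  ⟨fun k => m.1 k + 1,
   fun a b hab => add_lt_add_left (m.2.1 hab) _,
   fun k => by show 0 ≤ m.1 k + 1; have := m.2.2 k; omega⟩

lemma sFun_mul_aFun (m : Fin d → ℤ) (θ : Pt d) :
    sFun d d θ * aFun d m θ = aFun d (fun k => m k + 1) θ := by
  unfold aFun
  rw [Finset.mul_sum]
  apply Finset.sum_congr rfl
  intro σ _
  rw [sFun_top, mul_left_comm]
  congr 1
  rw [monom_eq_prod, monom_eq_prod, ← Finset.prod_mul_distrib]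
  apply Finset.prod_congr rfl
  intro k _
  rw [← zpow_one_add₀ (Circle.coe_ne_zero _)]
  congr 1
  show 1 + m (σ k) = ((fun k => m k + 1) ∘ σ) k
  simp [Function.comp]
  ring

lemma mul_aLp (m : Fin d → ℤ) :
    mulCLM (volume : Measure (Pt d)) (sFun d d) (sMem d d) (aLp d m)
      = aLp d (fun k => m k + 1) := by
  apply Lp.ext
  filter_upwards [mulCLM_coeFn (volume : Measure (Pt d)) (sFun d d) (sMem d d) (aLp d m),
    (memℒp_aFun d m).coeFn_toLp, (memℒp_aFun d (fun k => m k + 1)).coeFn_toLp]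
    with θ h1 h2 h3
  rw [h1]
  show sFun d d θ * (aLp d m) θ = _
  simp only [aLp]
  rw [h2, h3, sFun_mul_aFun]

lemma Ts_aH2 (m : DD d) : Ts d d (aH2 d m) = aH2 d (succD d m) := by
  show ((H2 d).orthogonalProjectionOnto ∘L
    ((mulCLM volume (sFun d d) (sMem d d)) ∘L (H2 d).subtypeL)) (aH2 d m) = _
  rw [ContinuousLinearMap.comp_apply, ContinuousLinearMap.comp_apply]
  rw [show ((H2 d).subtypeL (aH2 d m)) = aLp d m.1 from rfl]
  rw [mul_aLp]
  rw [show aLp d (fun k => m.1 k + 1) = ((aH2 d (succD d m) : H2 d) : L2 d) from rfl]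
  exact Submodule.orthogonalProjectionOnto_mem_subspace_eq_self _

lemma Ts_bH (m : DD d) : Ts d d (bH d m) = bH d (succD d m) := by
  unfold bH
  rw [ContinuousLinearMap.map_smul, Ts_aH2]

lemma hgt_succD (m : DD d) : hgt d hd (succD d m) = hgt d hd m + 1 := by
  show ((succD d m).1 (idx d hd)).toNat = (m.1 (idx d hd)).toNat + 1
  have h1 : (succD d m).1 (idx d hd) = m.1 (idx d hd) + 1 := rfl
  have h2 := m.2.2 (idx d hd)
  omega

lemma red_succD (m : DD d) : red d hd (succD d m) = red d hd m := by
  apply Subtype.ext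
  funext k
  show (m.1 k + 1) - (m.1 (idx d hd) + 1) = m.1 k - m.1 (idx d hd)
  ring

/-- The Hilbert basis of the target `lp` space. -/
def CBB : HilbertBasis (DD d) ℂ (lp (fun _ : ℕ => Ecoef d) 2) :=
  HilbertBasis.mkOfOrthogonalEqBot (orthonormal_CB d hd) (orth_CB d hd)

lemma CBB_apply : ⇑(CBB d hd) = CB d hd :=
  HilbertBasis.coe_mkOfOrthogonalEqBot _ _

/-- Coordinate evaluation on the target `lp` space, as a continuous linear map. -/
def evalCLM (n : ℕ) : lp (fun _ : ℕ => Ecoef d) 2 →L[ℂ] Ecoef d :=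
  LinearMap.mkContinuous
    { toFun := fun f => f n
      map_add' := fun f g => rfl
      map_smul' := fun c f => rfl }
    1 (fun f => by
      show ‖f n‖ ≤ 1 * ‖f‖
      simpa using lp.norm_apply_le_norm (by norm_num : (2 : ℝ≥0∞) ≠ 0) f n)

lemma evalCLM_apply (n : ℕ) (f : lp (fun _ : ℕ => Ecoef d) 2) :
    evalCLM d n f = f n := rfl

end Chunk6

set_option maxHeartbeats 2000000 in
/-- **Lemma 2.5**: `T_p` on `H²_anti` is unitarily equivalent to the unilateral shift
of infinite multiplicity: there is a unitary `U₁` from `H²_anti` onto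
`ℓ²(ℕ; E) ≅ H²_E(𝔻)` (with `E` the coefficient space) with `U₁ T_p = S U₁`,
where `S` is the shift `(x_0, x_1, …) ↦ (0, x_0, x_1, …)`. -/
theorem stmt14 (d : ℕ) (hd : 2 ≤ d) :
    ∃ U : ↥(H2 d) ≃ₗᵢ[ℂ] lp (fun _ : ℕ => ↥(Ecoef d)) 2,
      ∀ f : ↥(H2 d),
        ((U ((Ts d d) f) : ∀ _ : ℕ, ↥(Ecoef d)) 0 = 0 ∧
          ∀ n : ℕ, (U ((Ts d d) f) : ∀ _ : ℕ, ↥(Ecoef d)) (n + 1) =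
            (U f : ∀ _ : ℕ, ↥(Ecoef d)) n) := by
  classical
  set U : ↥(H2 d) ≃ₗᵢ[ℂ] lp (fun _ : ℕ => ↥(Ecoef d)) 2 :=
    (BH d).repr.trans (CBB d hd).repr.symm with hU
  refine ⟨U, ?_⟩
  have hUB : ∀ m : DD d, U (bH d m) = CB d hd m := by
    intro m
    rw [hU, LinearIsometryEquiv.trans_apply]
    rw [← CBB_apply d hd, ← BH_apply d, (BH d).repr_self m, ← (CBB d hd).repr_self m]
    exact (CBB d hd).repr.symm_apply_apply _
  set ULM : ↥(H2 d) →L[ℂ] lp (fun _ : ℕ => ↥(Ecoef d)) 2 :=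
    U.toLinearIsometry.toContinuousLinearMap with hULM
  have hULMapp : ∀ f, ULM f = U f := fun f => rfl
  have hdense : Dense (Submodule.span ℂ (Set.range (bH d)) : Set (H2 d)) := by
    have h1 := (BH d).dense_span
    rw [BH_apply] at h1
    exact Submodule.dense_iff_topologicalClosure_eq_top.mpr h1
  have key0 : (evalCLM d 0).comp (ULM.comp (Ts d d)) = 0 := by
    apply ContinuousLinearMap.ext_on hdense
    rintro _ ⟨m, rfl⟩
    show evalCLM d 0 (ULM (Ts d d (bH d m))) = 0
    rw [Ts_bH d m, hULMapp, hUB]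
    show (CB d hd (succD d m)) 0 = 0
    unfold CB
    rw [hgt_succD d hd]
    exact lp.single_apply_ne _ _ _ (by omega)
  have keyn : ∀ n : ℕ, (evalCLM d (n+1)).comp (ULM.comp (Ts d d))
      = (evalCLM d n).comp ULM := by
    intro n
    apply ContinuousLinearMap.ext_on hdense
    rintro _ ⟨m, rfl⟩
    show evalCLM d (n+1) (ULM (Ts d d (bH d m))) = evalCLM d n (ULM (bH d m))
    rw [Ts_bH d m, hULMapp, hULMapp, hUB, hUB]
    show (CB d hd (succD d m)) (n+1) = (CB d hd m) n
    unfold CB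
    rw [hgt_succD d hd, red_succD d hd]
    rcases eq_or_ne n (hgt d hd m) with h | h
    · rw [h, lp.single_apply_self, lp.single_apply_self]
    · rw [lp.single_apply_ne _ _ _ (by omega), lp.single_apply_ne _ _ _ h]
  intro f
  constructor
  · have h := ContinuousLinearMap.ext_iff.mp key0 f
    exact h
  · intro n
    have h := ContinuousLinearMap.ext_iff.mp (keyn n) f
    exact h


end SymPoly
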